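/- Let n, m be natural numbers with 2m ≤ n, let M be the real n×n matrix whose only nonzero entries are M_{2i−1,2i} = μ_i and M_{2i,2i−1} = −μ_i for 1 ≤ i ≤ m, and let A be a real diagonal n×n matrix with diagonal entries a₁,…,a_n. Fix 1 ≤ i ≤ m with μ_i ≠ 0 and 2m < j ≤ n, and let W_{ij} be the two-dimensional space spanned by w₁ := E_{2i−1,j} − E_{j,2i−1} and w₂ := E_{2i,j} − E_{j,2i}. Then the bilinear form (X,Y) ↦ Tr(M·(X·A·Y − Y·A·X)) restricted to W_{ij} is degenerate (i.e. some nonzero X ∈ W_{ij} pairs to zero with all Y ∈ W_{ij}) if and only if a_j = 0; moreover, when a_j = 0 the restricted form vanishes identically. -/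

import Mathlib

open Matrix

/-- The index `2i−1` (1-based), i.e. the first index of the `i`-th `2×2` block. -/
def idxA {n m : ℕ} (h : 2 * m ≤ n) (i : Fin m) : Fin n :=
  ⟨2 * i.val, by have := i.isLt; omega⟩

/-- The index `2i` (1-based), i.e. the second index of the `i`-th `2×2` block. -/
def idxB {n m : ℕ} (h : 2 * m ≤ n) (i : Fin m) : Fin n :=
  ⟨2 * i.val + 1, by have := i.isLt; omega⟩

/-- The block-diagonal skew-symmetric momentum matrix whose only nonzero entries are
`M_{2i−1,2i} = μ_i` and `M_{2i,2i−1} = −μ_i` for `1 ≤ i ≤ m`. -/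
def blockMom {n m : ℕ} (h : 2 * m ≤ n) (μ : Fin m → ℝ) : Matrix (Fin n) (Fin n) ℝ :=
  ∑ i : Fin m,
    (Matrix.single (idxA h i) (idxB h i) (μ i) -
      Matrix.single (idxB h i) (idxA h i) (μ i))

/-- The element `c₁·w₁ + c₂·w₂` of `W_{ij}`, where
`w₁ = E_{2i−1,j} − E_{j,2i−1}` and `w₂ = E_{2i,j} − E_{j,2i}`. -/
def wVec {n m : ℕ} (h : 2 * m ≤ n) (i : Fin m) (j : Fin n) (c : ℝ × ℝ) :
    Matrix (Fin n) (Fin n) ℝ :=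
  c.1 • (Matrix.single (idxA h i) j (1 : ℝ) -
      Matrix.single j (idxA h i) (1 : ℝ)) +
    c.2 • (Matrix.single (idxB h i) j (1 : ℝ) -
      Matrix.single j (idxB h i) (1 : ℝ))


section Aux

variable {n m : ℕ}

lemma sbm_mul_diagonal (x y : Fin n) (c : ℝ) (a : Fin n → ℝ) :
    Matrix.single x y c * Matrix.diagonal a =
      Matrix.single x y (c * a y) := by
  ext u v
  rw [Matrix.mul_diagonal]
  by_cases hu : x = u
  · by_cases hv : y = v
    · subst hu; subst hv; simp
    · subst hu; simp [Matrix.single_apply_of_ne, hv]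
  · simp [Matrix.single_apply_of_ne, hu]

lemma trace_sbm_mul (x y : Fin n) (e : ℝ) (M : Matrix (Fin n) (Fin n) ℝ) :
    (Matrix.single x y e * M).trace = e * M y x := by
  rw [Matrix.trace]
  rw [Finset.sum_eq_single x]
  · simp [Matrix.diag, Matrix.single_mul_apply_same]
  · intro b _ hb
    simp [Matrix.diag, Matrix.single_mul_apply_of_ne _ _ _ _ _ hb]
  · simp

lemma idxA_ne_idxB (h : 2 * m ≤ n) (k l : Fin m) : idxA h k ≠ idxB h l := by
  simp only [idxA, idxB, ne_eq, Fin.mk.injEq]; omega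

lemma blockMom_apply_diag (h : 2 * m ≤ n) (μ : Fin m → ℝ) (x : Fin n) :
    blockMom h μ x x = 0 := by
  rw [blockMom, Matrix.sum_apply]
  apply Finset.sum_eq_zero
  intro k _
  have h1 : ¬(idxA h k = x ∧ idxB h k = x) := by
    rintro ⟨h1, h2⟩; exact idxA_ne_idxB h k k (h1.trans h2.symm)
  have h2 : ¬(idxB h k = x ∧ idxA h k = x) := by
    rintro ⟨h1, h2⟩; exact idxA_ne_idxB h k k (h2.trans h1.symm)
  simp [Matrix.sub_apply, Matrix.single_apply_of_ne _ _ _ _ _ h1,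
    Matrix.single_apply_of_ne _ _ _ _ _ h2]

lemma blockMom_apply_AB (h : 2 * m ≤ n) (μ : Fin m → ℝ) (i : Fin m) :
    blockMom h μ (idxA h i) (idxB h i) = μ i := by
  rw [blockMom, Matrix.sum_apply]
  rw [Finset.sum_eq_single i]
  · simp [Matrix.sub_apply,
      Matrix.single_apply_of_row_ne (Ne.symm (idxA_ne_idxB h i i))]
  · intro k _ hk
    have hki : k.val ≠ i.val := fun hc => hk (Fin.ext hc)
    have h1 : ¬(idxA h k = idxA h i ∧ idxB h k = idxB h i) := by
      simp only [idxA, idxB, Fin.mk.injEq]; omega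
    have h2 : ¬(idxB h k = idxA h i ∧ idxA h k = idxB h i) := by
      simp only [idxA, idxB, Fin.mk.injEq]; omega
    simp [Matrix.sub_apply, Matrix.single_apply_of_ne _ _ _ _ _ h1,
      Matrix.single_apply_of_ne _ _ _ _ _ h2]
  · simp

lemma blockMom_apply_BA (h : 2 * m ≤ n) (μ : Fin m → ℝ) (i : Fin m) :
    blockMom h μ (idxB h i) (idxA h i) = -μ i := by
  rw [blockMom, Matrix.sum_apply]
  rw [Finset.sum_eq_single i]
  · simp [Matrix.sub_apply,
      Matrix.single_apply_of_row_ne (idxA_ne_idxB h i i)]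
  · intro k _ hk
    have hki : k.val ≠ i.val := fun hc => hk (Fin.ext hc)
    have h1 : ¬(idxA h k = idxB h i ∧ idxB h k = idxA h i) := by
      simp only [idxA, idxB, Fin.mk.injEq]; omega
    have h2 : ¬(idxB h k = idxB h i ∧ idxA h k = idxA h i) := by
      simp only [idxA, idxB, Fin.mk.injEq]; omega
    simp [Matrix.sub_apply, Matrix.single_apply_of_ne _ _ _ _ _ h1,
      Matrix.single_apply_of_ne _ _ _ _ _ h2]
  · simp

lemma key_trace (h : 2 * m ≤ n) (μ : Fin m → ℝ) (a : Fin n → ℝ) (i : Fin m)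
    (j : Fin n) (hj : 2 * m ≤ j.val) (c d : ℝ × ℝ) :
    (blockMom h μ *
        (wVec h i j c * Matrix.diagonal a * wVec h i j d -
          wVec h i j d * Matrix.diagonal a * wVec h i j c)).trace =
      2 * μ i * a j * (c.1 * d.2 - c.2 * d.1) := by
  set p := idxA h i with hp
  set q := idxB h i with hq
  have hpj : p ≠ j := by simp only [hp, idxA, ne_eq, Fin.ext_iff]; have := i.isLt; omega
  have hqj : q ≠ j := by simp only [hq, idxB, ne_eq, Fin.ext_iff]; have := i.isLt; omega
  have hpq : p ≠ q := idxA_ne_idxB h i i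
  have hZ : ∀ u v : ℝ × ℝ, wVec h i j u * Matrix.diagonal a * wVec h i j v =
      Matrix.single p p (-(u.1 * a j * v.1)) +
      Matrix.single p q (-(u.1 * a j * v.2)) +
      Matrix.single q p (-(u.2 * a j * v.1)) +
      Matrix.single q q (-(u.2 * a j * v.2)) +
      Matrix.single j j (-(u.1 * a p * v.1 + u.2 * a q * v.2)) := by
    intro u v
    rw [wVec, wVec]
    simp only [← hp, ← hq, smul_sub, Matrix.smul_single, smul_eq_mul, mul_one,
      add_mul, sub_mul, mul_add, mul_sub, sbm_mul_diagonal,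
      Matrix.single_mul_single_same,
      Matrix.single_mul_single_of_ne _ _ _ _ hpq,
      Matrix.single_mul_single_of_ne _ _ _ _ hpq.symm,
      Matrix.single_mul_single_of_ne _ _ _ _ hpj,
      Matrix.single_mul_single_of_ne _ _ _ _ hqj,
      Matrix.single_mul_single_of_ne _ _ _ _ hpj.symm,
      Matrix.single_mul_single_of_ne _ _ _ _ hqj.symm]
    ext x y
    simp only [Matrix.add_apply, Matrix.sub_apply, Matrix.zero_apply, Matrix.neg_apply]
    by_cases h1 : p = x ∧ p = y
    · obtain ⟨rfl, h1⟩ := h1; subst h1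
      simp [Matrix.single_apply_of_ne, hpq, hpj, Ne.symm, And.comm] <;> ring
    · by_cases h2 : p = x ∧ q = y
      · obtain ⟨rfl, h2⟩ := h2; subst h2
        simp [Matrix.single_apply_of_ne, hpq, hpj, hqj, Ne.symm, And.comm] <;> ring
      · by_cases h3 : q = x ∧ p = y
        · obtain ⟨rfl, h3⟩ := h3; subst h3
          simp [Matrix.single_apply_of_ne, hpq, hpj, hqj, Ne.symm, And.comm] <;> ring
        · by_cases h4 : q = x ∧ q = y
          · obtain ⟨rfl, h4⟩ := h4; subst h4
            simp [Matrix.single_apply_of_ne, hpq, hpj, hqj, Ne.symm, And.comm] <;> ring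
          · by_cases h5 : j = x ∧ j = y
            · obtain ⟨rfl, h5⟩ := h5; subst h5
              simp [Matrix.single_apply_of_ne, hpq, hpj, hqj, Ne.symm, And.comm] <;> ring
            · have e1 : ¬(p = x ∧ j = y) ∨ True := Or.inr trivial
              simp only [Matrix.single_apply_of_ne _ _ _ _ _ h1,
                Matrix.single_apply_of_ne _ _ _ _ _ h2,
                Matrix.single_apply_of_ne _ _ _ _ _ h3,
                Matrix.single_apply_of_ne _ _ _ _ _ h4,
                Matrix.single_apply_of_ne _ _ _ _ _ h5]
              ring
  have hAB : blockMom h μ p q = μ i := blockMom_apply_AB h μ i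
  have hBA : blockMom h μ q p = -μ i := blockMom_apply_BA h μ i
  rw [Matrix.trace_mul_comm]
  rw [sub_mul, hZ c d, hZ d c]
  simp only [add_mul, Matrix.trace_sub, Matrix.trace_add, trace_sbm_mul,
    blockMom_apply_diag, hAB, hBA]
  ring

end Aux

/-- The pencil form `P_λ(X,Y) = Tr(M·(X·A·Y − Y·A·X))`, `A = diagonal a`, restricted to
the plane `W_{ij}` (`1 ≤ i ≤ m` with `μ_i ≠ 0`, `2m < j ≤ n`) is degenerate if and
only if `a_j = 0`; moreover when `a_j = 0` the restricted form vanishes identically. -/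


theorem Wij_degenerate_iff (n m : ℕ) (h : 2 * m ≤ n) (μ : Fin m → ℝ)
    (a : Fin n → ℝ) (i : Fin m) (hμ : μ i ≠ 0) (j : Fin n) (hj : 2 * m ≤ j.val) :
    ((∃ c : ℝ × ℝ, c ≠ 0 ∧ ∀ d : ℝ × ℝ,
        (blockMom h μ *
          (wVec h i j c * Matrix.diagonal a * wVec h i j d -
            wVec h i j d * Matrix.diagonal a * wVec h i j c)).trace = 0) ↔
      a j = 0) ∧
    (a j = 0 → ∀ c d : ℝ × ℝ,
      (blockMom h μ *
        (wVec h i j c * Matrix.diagonal a * wVec h i j d -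
          wVec h i j d * Matrix.diagonal a * wVec h i j c)).trace = 0) := by
  have key := key_trace h μ a i j hj
  constructor
  · constructor
    · rintro ⟨c, hc, hall⟩
      have := hall (-c.2, c.1)
      rw [key] at this
      simp only at this
      have hc2 : c.1 * c.1 + c.2 * c.2 ≠ 0 := by
        have : c.1 ≠ 0 ∨ c.2 ≠ 0 := by
          by_contra hcon
          push_neg at hcon
          exact hc (Prod.ext hcon.1 hcon.2)
        rcases this with h1 | h1
        · nlinarith [mul_self_pos.mpr h1, mul_self_nonneg c.2]
        · nlinarith [mul_self_pos.mpr h1, mul_self_nonneg c.1]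
      have : 2 * μ i * a j * (c.1 * c.1 + c.2 * c.2) = 0 := by linarith [this]
      rcases mul_eq_zero.mp this with h1 | h1
      · rcases mul_eq_zero.mp h1 with h2 | h2
        · rcases mul_eq_zero.mp h2 with h3 | h3
          · norm_num at h3
          · exact absurd h3 hμ
        · exact h2
      · exact absurd h1 hc2
    · intro haj
      refine ⟨(1, 0), by simp, fun d => ?_⟩
      rw [key, haj]; ring
  · intro haj c d
    rw [key, haj]; ring
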